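/- THEOREM (warm-up, 1/3-OCRS for matching with edge arrival): let c = 1/3. If p satisfies the c-fixed-point condition at every edge preceding e in the arrival order, then P(F_e) ≥ 1/3. Consequently, there exists p : E → [0,1] satisfying the (1/3)-fixed-point condition at every edge, so that the greedy process outputs a matching in which every edge e is included with probability exactly x_e/3. -/

import Mathlib

open Finset

/-- `touches e v` says that vertex `v` is an endpoint of the edge `e`. -/
def touches {V : Type*} (e : V × V) (v : V) : Prop :=
  e.1 = v ∨ e.2 = v

open Classical in
/-- The greedy matching process on edges `ends 0, ends 1, …, ends (m-1)` (arriving in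
this order) with activation pattern `ω`: `greedyUpTo ends ω k` is the set of (indices of)
edges matched after the first `k` edges have been processed.  An arriving edge is matched
iff it is active and both of its endpoints are currently unmatched. -/
noncomputable def greedyUpTo {V : Type*} {m : ℕ} (ends : Fin m → V × V)
    (ω : Fin m → Bool) : ℕ → Finset (Fin m)
  | 0 => ∅
  | k + 1 =>
    if h : k < m then
      if ω ⟨k, h⟩ = true ∧
          (∀ j ∈ greedyUpTo ends ω k,
            ¬ touches (ends j) (ends ⟨k, h⟩).1 ∧ ¬ touches (ends j) (ends ⟨k, h⟩).2)
      then insert ⟨k, h⟩ (greedyUpTo ends ω k) else greedyUpTo ends ω k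
    else greedyUpTo ends ω k

open Classical in
/-- Probability of the event `P` under the (finitely supported) mass function `mass`. -/
noncomputable def prOf {Ω : Type*} [Fintype Ω] (mass : Ω → ℝ) (P : Ω → Prop) : ℝ :=
  ∑ ω, if P ω then mass ω else 0

/-- Product Bernoulli mass on activation patterns: coordinate `i` is `true` with
probability `p i`, independently across edges. -/
noncomputable def massP {m : ℕ} (p : Fin m → ℝ) (ω : Fin m → Bool) : ℝ :=
  ∏ i, if ω i then p i else 1 - p i

/-- The event `F_e`: both endpoints of edge `i` are unmatched just before `i` is
processed by the greedy process. -/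
def freeAt {V : Type*} {m : ℕ} (ends : Fin m → V × V) (ω : Fin m → Bool) (i : Fin m) :
    Prop :=
  ∀ j ∈ greedyUpTo ends ω i.1,
    ¬ touches (ends j) (ends i).1 ∧ ¬ touches (ends j) (ends i).2

/-- The event that edge `i` ends up matched by the greedy process. -/
def matchedEdge {V : Type*} {m : ℕ} (ends : Fin m → V × V) (ω : Fin m → Bool)
    (i : Fin m) : Prop :=
  i ∈ greedyUpTo ends ω m

/-- The `c`-fixed-point condition at edge `i`:
`p i * P(F_i) = c * x i`, i.e. the greedy process matches edge `i` with probability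
exactly `c * x i`. -/
def fixedPt {V : Type*} {m : ℕ} (ends : Fin m → V × V) (x p : Fin m → ℝ) (c : ℝ)
    (i : Fin m) : Prop :=
  p i * prOf (massP p) (fun ω => freeAt ends ω i) = c * x i


section AuxOCRS

open Classical

variable {V : Type*} {m : ℕ}

/-! ### Basic lemmas about the greedy process -/

lemma greedy_succ (ends : Fin m → V × V) (ω : Fin m → Bool) (k : ℕ) :
    greedyUpTo ends ω (k + 1) =
      if h : k < m then
        if ω ⟨k, h⟩ = true ∧
            (∀ j ∈ greedyUpTo ends ω k,
              ¬ touches (ends j) (ends ⟨k, h⟩).1 ∧ ¬ touches (ends j) (ends ⟨k, h⟩).2)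
        then insert ⟨k, h⟩ (greedyUpTo ends ω k) else greedyUpTo ends ω k
      else greedyUpTo ends ω k := rfl

lemma mem_greedy_lt (ends : Fin m → V × V) (ω : Fin m → Bool) :
    ∀ k : ℕ, ∀ j ∈ greedyUpTo ends ω k, j.1 < k := by
  intro k
  induction k with
  | zero => intro j hj; simp [greedyUpTo] at hj
  | succ k ih =>
    intro j hj
    rw [greedy_succ] at hj
    split_ifs at hj with h1 h2
    · rcases Finset.mem_insert.1 hj with rfl | hj
      · exact Nat.lt_succ_self k
      · exact Nat.lt_succ_of_lt (ih j hj)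
    · exact Nat.lt_succ_of_lt (ih j hj)
    · exact Nat.lt_succ_of_lt (ih j hj)

lemma greedy_subset_succ (ends : Fin m → V × V) (ω : Fin m → Bool) (k : ℕ) :
    greedyUpTo ends ω k ⊆ greedyUpTo ends ω (k + 1) := by
  rw [greedy_succ]
  split_ifs
  · exact Finset.subset_insert _ _
  · exact Finset.Subset.refl _
  · exact Finset.Subset.refl _

lemma greedy_mono (ends : Fin m → V × V) (ω : Fin m → Bool) {k l : ℕ} (h : k ≤ l) :
    greedyUpTo ends ω k ⊆ greedyUpTo ends ω l := by
  induction l, h using Nat.le_induction with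
  | base => exact Finset.Subset.refl _
  | succ l hl ih => exact ih.trans (greedy_subset_succ ends ω l)

lemma mem_greedy_enter (ends : Fin m → V × V) (ω : Fin m → Bool) :
    ∀ k : ℕ, ∀ i ∈ greedyUpTo ends ω k, i ∈ greedyUpTo ends ω (i.1 + 1) := by
  intro k
  induction k with
  | zero => intro i hi; simp [greedyUpTo] at hi
  | succ k ih =>
    intro i hi
    rw [greedy_succ] at hi
    split_ifs at hi with h1 h2
    · rcases Finset.mem_insert.1 hi with rfl | hi
      · rw [greedy_succ, dif_pos h1, if_pos h2]
        exact Finset.mem_insert_self _ _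
      · exact ih i hi
    · exact ih i hi
    · exact ih i hi

lemma mem_greedy_iff_self (ends : Fin m → V × V) (ω : Fin m → Bool) (i : Fin m) :
    i ∈ greedyUpTo ends ω (i.1 + 1) ↔ (ω i = true ∧ freeAt ends ω i) := by
  constructor
  · intro hi
    rw [greedy_succ, dif_pos i.isLt] at hi
    split_ifs at hi with hc
    · exact hc
    · exact absurd (mem_greedy_lt ends ω _ i hi) (lt_irrefl _)
  · intro h
    rw [greedy_succ, dif_pos i.isLt]
    split_ifs with hc
    · exact Finset.mem_insert_self _ _
    · exact absurd h hc

lemma matchedEdge_iff (ends : Fin m → V × V) (ω : Fin m → Bool) (i : Fin m) :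
    matchedEdge ends ω i ↔ (ω i = true ∧ freeAt ends ω i) := by
  constructor
  · intro h
    exact (mem_greedy_iff_self ends ω i).1 (mem_greedy_enter ends ω m i h)
  · intro h
    exact greedy_mono ends ω i.isLt ((mem_greedy_iff_self ends ω i).2 h)

lemma mem_greedy_iff_matched (ends : Fin m → V × V) (ω : Fin m → Bool) {j e : Fin m}
    (h : j < e) : (j ∈ greedyUpTo ends ω e.1) ↔ matchedEdge ends ω j := by
  constructor
  · intro hj
    exact greedy_mono ends ω e.isLt.le hj
  · intro hj
    exact greedy_mono ends ω h (mem_greedy_enter ends ω m j hj)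

lemma greedy_congr (ends : Fin m → V × V) {ω ω' : Fin m → Bool} :
    ∀ k : ℕ, (∀ j : Fin m, j.1 < k → ω j = ω' j) →
      greedyUpTo ends ω k = greedyUpTo ends ω' k := by
  intro k
  induction k with
  | zero => intro _; rfl
  | succ k ih =>
    intro hagree
    have hk := ih fun j hj => hagree j (Nat.lt_succ_of_lt hj)
    rw [greedy_succ, greedy_succ, hk]
    by_cases h : k < m
    · rw [dif_pos h, dif_pos h, hagree ⟨k, h⟩ (Nat.lt_succ_self k)]
    · rw [dif_neg h, dif_neg h]

lemma freeAt_congr (ends : Fin m → V × V) {ω ω' : Fin m → Bool} (i : Fin m)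
    (h : ∀ j : Fin m, j.1 < i.1 → ω j = ω' j) :
    freeAt ends ω i ↔ freeAt ends ω' i := by
  unfold freeAt
  rw [greedy_congr ends i.1 h]

lemma greedy_matching (ends : Fin m → V × V) (ω : Fin m → Bool) :
    ∀ i ∈ greedyUpTo ends ω m, ∀ j ∈ greedyUpTo ends ω m, i ≠ j →
      ¬ touches (ends j) (ends i).1 ∧ ¬ touches (ends j) (ends i).2 := by
  have main : ∀ i ∈ greedyUpTo ends ω m, ∀ j ∈ greedyUpTo ends ω m, j < i →
      ¬ touches (ends j) (ends i).1 ∧ ¬ touches (ends j) (ends i).2 := by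
    intro i hi j hj hji
    have hfree := (mem_greedy_iff_self ends ω i).1 (mem_greedy_enter ends ω m i hi)
    have hjmem : j ∈ greedyUpTo ends ω i.1 :=
      greedy_mono ends ω hji (mem_greedy_enter ends ω m j hj)
    exact hfree.2 j hjmem
  intro i hi j hj hij
  rcases lt_or_gt_of_ne hij with h | h
  · have hm := main j hj i hi h
    simp only [touches, not_or] at hm ⊢
    exact ⟨⟨fun h' => hm.1.1 h'.symm, fun h' => hm.2.1 h'.symm⟩,
      ⟨fun h' => hm.1.2 h'.symm, fun h' => hm.2.2 h'.symm⟩⟩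
  · exact main i hi j hj h

/-! ### Basic lemmas about the product measure -/

lemma massP_nonneg {p : Fin m → ℝ} (hp : ∀ i, 0 ≤ p i ∧ p i ≤ 1) (ω : Fin m → Bool) :
    0 ≤ massP p ω := by
  refine Finset.prod_nonneg fun i _ => ?_
  split_ifs
  · exact (hp i).1
  · linarith [(hp i).2]

lemma massP_total (p : Fin m → ℝ) : ∑ ω : Fin m → Bool, massP p ω = 1 := by
  unfold massP
  rw [← Fintype.prod_sum fun i (b : Bool) => if b then p i else 1 - p i]
  rw [Finset.prod_eq_one]
  intro i _
  rw [Fintype.sum_bool]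
  simp

lemma prOf_nonneg {Ω : Type*} [Fintype Ω] {mass : Ω → ℝ} (h : ∀ ω, 0 ≤ mass ω)
    (P : Ω → Prop) : 0 ≤ prOf mass P := by
  refine Finset.sum_nonneg fun ω _ => ?_
  split_ifs
  · exact h ω
  · exact le_refl 0

lemma prOf_congr {Ω : Type*} [Fintype Ω] (mass : Ω → ℝ) {P Q : Ω → Prop}
    (h : ∀ ω, P ω ↔ Q ω) : prOf mass P = prOf mass Q := by
  refine Finset.sum_congr rfl fun ω _ => ?_
  by_cases hq : Q ω
  · rw [if_pos ((h ω).2 hq), if_pos hq]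
  · rw [if_neg (fun hp => hq ((h ω).1 hp)), if_neg hq]

lemma prOf_compl (p : Fin m → ℝ) (P : (Fin m → Bool) → Prop) :
    prOf (massP p) P + prOf (massP p) (fun ω => ¬ P ω) = 1 := by
  unfold prOf
  rw [← Finset.sum_add_distrib, ← massP_total p]
  refine Finset.sum_congr rfl fun ω _ => ?_
  by_cases hP : P ω
  · simp [hP]
  · simp [hP]

/-! ### Splitting off one coordinate -/

noncomputable def extAt (i : Fin m) (g : {j : Fin m // j ≠ i} → Bool) (b : Bool) :
    Fin m → Bool :=
  (Equiv.funSplitAt i Bool).symm (b, g)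

lemma extAt_self (i : Fin m) (g : {j : Fin m // j ≠ i} → Bool) (b : Bool) :
    extAt i g b i = b := by
  simp [extAt]

lemma extAt_ne (i : Fin m) (g : {j : Fin m // j ≠ i} → Bool) (b : Bool) {j : Fin m}
    (h : j ≠ i) : extAt i g b j = g ⟨j, h⟩ := by
  simp [extAt, h]

lemma extAt_false_eq_update (i : Fin m) (g : {j : Fin m // j ≠ i} → Bool) (b : Bool) :
    extAt i g b = Function.update (extAt i g true) i b := by
  funext j
  by_cases h : j = i
  · subst h
    rw [Function.update_self, extAt_self]
  · rw [Function.update_of_ne h, extAt_ne i g b h, extAt_ne i g true h]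

lemma sum_split (i : Fin m) (f : (Fin m → Bool) → ℝ) :
    ∑ ω : Fin m → Bool, f ω
      = ∑ g : {j : Fin m // j ≠ i} → Bool, (f (extAt i g true) + f (extAt i g false)) := by
  rw [← Equiv.sum_comp (Equiv.funSplitAt i Bool).symm f, Fintype.sum_prod_type,
    Fintype.sum_bool, ← Finset.sum_add_distrib]
  rfl

noncomputable def restProd (p : Fin m → ℝ) (i : Fin m)
    (g : {j : Fin m // j ≠ i} → Bool) : ℝ :=
  ∏ j : {j : Fin m // j ≠ i}, (if g j then p j.1 else 1 - p j.1)

lemma restProd_nonneg {p : Fin m → ℝ} (hp : ∀ i, 0 ≤ p i ∧ p i ≤ 1) (i : Fin m)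
    (g : {j : Fin m // j ≠ i} → Bool) : 0 ≤ restProd p i g := by
  refine Finset.prod_nonneg fun j _ => ?_
  split_ifs
  · exact (hp j.1).1
  · linarith [(hp j.1).2]

lemma massP_extAt (p : Fin m → ℝ) (i : Fin m) (g : {j : Fin m // j ≠ i} → Bool)
    (b : Bool) :
    massP p (extAt i g b) = (if b then p i else 1 - p i) * restProd p i g := by
  unfold massP restProd
  rw [← Finset.mul_prod_erase _ _ (Finset.mem_univ i), extAt_self]
  congr 1
  rw [Finset.prod_subtype (Finset.univ.erase i)
    (p := fun j : Fin m => j ≠ i) (by intro j; simp)]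
  refine Finset.prod_congr rfl fun j _ => ?_
  rw [extAt_ne i g b j.2]

lemma prOf_split (p : Fin m → ℝ) (i : Fin m) (Q : (Fin m → Bool) → Prop)
    (hQ : ∀ (ω : Fin m → Bool) (b : Bool), Q (Function.update ω i b) ↔ Q ω) :
    prOf (massP p) Q = ∑ g : {j : Fin m // j ≠ i} → Bool,
      (if Q (extAt i g true) then restProd p i g else 0) := by
  unfold prOf
  rw [sum_split i]
  refine Finset.sum_congr rfl fun g _ => ?_
  have hiff : Q (extAt i g false) ↔ Q (extAt i g true) := by
    rw [extAt_false_eq_update i g false, hQ]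
  by_cases h : Q (extAt i g true)
  · rw [if_pos h, if_pos (hiff.2 h), if_pos h, massP_extAt, massP_extAt]
    simp only [if_true, Bool.false_eq_true, if_false]
    ring
  · rw [if_neg h, if_neg (fun hf => h (hiff.1 hf)), if_neg h, add_zero]

lemma prOf_cond (p : Fin m → ℝ) (i : Fin m) (Q : (Fin m → Bool) → Prop)
    (hQ : ∀ (ω : Fin m → Bool) (b : Bool), Q (Function.update ω i b) ↔ Q ω) :
    prOf (massP p) (fun ω => ω i = true ∧ Q ω) = p i * prOf (massP p) Q := by
  rw [prOf_split p i Q hQ, Finset.mul_sum]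
  unfold prOf
  rw [sum_split i]
  refine Finset.sum_congr rfl fun g _ => ?_
  simp only []
  have h2 : ¬ (extAt i g false i = true ∧ Q (extAt i g false)) := by
    rw [extAt_self]
    simp
  rw [if_neg h2, add_zero]
  by_cases h : Q (extAt i g true)
  · rw [if_pos ⟨extAt_self i g true, h⟩, if_pos h, massP_extAt]
    simp
  · rw [if_neg (fun hc => h hc.2), if_neg h, mul_zero]

lemma prOf_update (p : Fin m → ℝ) (i : Fin m) (c : ℝ) (Q : (Fin m → Bool) → Prop)
    (hQ : ∀ (ω : Fin m → Bool) (b : Bool), Q (Function.update ω i b) ↔ Q ω) :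
    prOf (massP (Function.update p i c)) Q = prOf (massP p) Q := by
  rw [prOf_split _ i Q hQ, prOf_split p i Q hQ]
  refine Finset.sum_congr rfl fun g _ => ?_
  have h : restProd (Function.update p i c) i g = restProd p i g := by
    unfold restProd
    refine Finset.prod_congr rfl fun j _ => ?_
    rw [Function.update_of_ne j.2]
  rw [h]

lemma prOf_eq_of_agree (p p' : Fin m → ℝ) (n : ℕ) (Q : (Fin m → Bool) → Prop)
    (hQ : ∀ ω ω' : Fin m → Bool, (∀ j : Fin m, j.1 < n → ω j = ω' j) → (Q ω ↔ Q ω'))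
    (hp : ∀ j : Fin m, j.1 < n → p j = p' j) :
    prOf (massP p) Q = prOf (massP p') Q := by
  have claim : ∀ k : ℕ,
      prOf (massP (fun j : Fin m => if j.1 < k then p' j else p j)) Q
        = prOf (massP p) Q := by
    intro k
    induction k with
    | zero =>
      have h0 : (fun j : Fin m => if j.1 < 0 then p' j else p j) = p := by
        funext j; rw [if_neg (Nat.not_lt_zero _)]
      rw [h0]
    | succ k ih =>
      by_cases hkm : k < m
      · by_cases hkn : k < n
        · have heq : (fun j : Fin m => if j.1 < k + 1 then p' j else p j)
              = (fun j : Fin m => if j.1 < k then p' j else p j) := by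
            funext j
            by_cases hj : j.1 < k
            · rw [if_pos (Nat.lt_succ_of_lt hj), if_pos hj]
            · by_cases hj2 : j.1 < k + 1
              · rw [if_pos hj2, if_neg hj, hp j (by omega)]
              · rw [if_neg hj2, if_neg hj]
          rw [heq, ih]
        · have hupd : (fun j : Fin m => if j.1 < k + 1 then p' j else p j)
              = Function.update (fun j : Fin m => if j.1 < k then p' j else p j)
                  ⟨k, hkm⟩ (p' ⟨k, hkm⟩) := by
            funext j
            by_cases hj : j = (⟨k, hkm⟩ : Fin m)
            · subst hj
              rw [Function.update_self, if_pos (Nat.lt_succ_self k)]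
            · rw [Function.update_of_ne hj]
              have hne : j.1 ≠ k := fun hh => hj (Fin.ext hh)
              by_cases hjk : j.1 < k
              · rw [if_pos (Nat.lt_succ_of_lt hjk), if_pos hjk]
              · rw [if_neg (by omega), if_neg hjk]
          have hQk : ∀ (ω : Fin m → Bool) (b : Bool),
              Q (Function.update ω ⟨k, hkm⟩ b) ↔ Q ω := by
            intro ω b
            refine hQ _ _ fun j hj => ?_
            refine Function.update_of_ne ?_ _ _
            intro hh
            rw [hh] at hj
            simp only [] at hj
            omega
          rw [hupd, prOf_update _ _ _ Q hQk, ih]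
      · have heq : (fun j : Fin m => if j.1 < k + 1 then p' j else p j)
            = (fun j : Fin m => if j.1 < k then p' j else p j) := by
          funext j
          have := j.isLt
          rw [if_pos (by omega), if_pos (by omega)]
        rw [heq, ih]
  have hm : (fun j : Fin m => if j.1 < m then p' j else p j) = p' := by
    funext j; rw [if_pos j.isLt]
  calc prOf (massP p) Q
      = prOf (massP (fun j : Fin m => if j.1 < m then p' j else p j)) Q := (claim m).symm
    _ = prOf (massP p') Q := by rw [hm]

/-! ### The key probability bound -/

lemma freeAt_update_iff (ends : Fin m → V × V) (i : Fin m) (ω : Fin m → Bool) (b : Bool) :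
    freeAt ends (Function.update ω i b) i ↔ freeAt ends ω i := by
  refine freeAt_congr ends i fun j hj => ?_
  refine Function.update_of_ne ?_ _ _
  intro hh
  rw [hh] at hj
  exact absurd hj (lt_irrefl _)

lemma key_free (ends : Fin m → V × V) (x : Fin m → ℝ)
    (hx0 : ∀ i, 0 ≤ x i)
    (hxv : ∀ v : V, ∑ i ∈ Finset.univ.filter (fun i => touches (ends i) v), x i ≤ 1)
    (p : Fin m → ℝ) (hp : ∀ i, 0 ≤ p i ∧ p i ≤ 1) (e : Fin m)
    (hfix : ∀ j : Fin m, j < e → fixedPt ends x p (1 / 3) j) :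
    prOf (massP p) (fun ω => freeAt ends ω e) ≥ 1 / 3 := by
  have hmassnn : ∀ ω, 0 ≤ massP p ω := massP_nonneg hp
  have hj : ∀ j : Fin m,
      prOf (massP p) (fun ω => j ∈ greedyUpTo ends ω e.1) ≤ x j / 3 := by
    intro j
    by_cases hje : j < e
    · have h1 : prOf (massP p) (fun ω => j ∈ greedyUpTo ends ω e.1)
          = prOf (massP p) (fun ω => ω j = true ∧ freeAt ends ω j) :=
        prOf_congr _ fun ω => by
          rw [mem_greedy_iff_matched ends ω hje, matchedEdge_iff]
      rw [h1, prOf_cond p j _ (freeAt_update_iff ends j)]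
      have := hfix j hje
      unfold fixedPt at this
      rw [this]
      linarith
    · have h0 : prOf (massP p) (fun ω => j ∈ greedyUpTo ends ω e.1) = 0 := by
        refine Finset.sum_eq_zero fun ω _ => ?_
        rw [if_neg]
        intro hmem
        have := mem_greedy_lt ends ω e.1 j hmem
        exact hje (by exact this)
      rw [h0]
      linarith [hx0 j]
  have hUB : prOf (massP p) (fun ω => ¬ freeAt ends ω e)
      ≤ (∑ j ∈ Finset.univ.filter (fun j => touches (ends j) (ends e).1),
          prOf (massP p) (fun ω => j ∈ greedyUpTo ends ω e.1))
        + (∑ j ∈ Finset.univ.filter (fun j => touches (ends j) (ends e).2),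
          prOf (massP p) (fun ω => j ∈ greedyUpTo ends ω e.1)) := by
    have swap : ∀ T : Finset (Fin m),
        (∑ j ∈ T, prOf (massP p) (fun ω => j ∈ greedyUpTo ends ω e.1))
          = ∑ ω : Fin m → Bool, ∑ j ∈ T,
              (if j ∈ greedyUpTo ends ω e.1 then massP p ω else 0) := by
      intro T
      unfold prOf
      rw [Finset.sum_comm]
      exact Finset.sum_congr rfl fun ω _ => Finset.sum_congr rfl fun j _ => by congr
    rw [swap, swap]
    unfold prOf
    rw [← Finset.sum_add_distrib]
    refine Finset.sum_le_sum fun ω _ => ?_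
    have hnn : ∀ T : Finset (Fin m),
        0 ≤ ∑ j ∈ T, (if j ∈ greedyUpTo ends ω e.1 then massP p ω else 0) := by
      intro T
      refine Finset.sum_nonneg fun j _ => ?_
      split_ifs
      · exact hmassnn ω
      · exact le_refl 0
    by_cases hF : freeAt ends ω e
    · rw [if_neg (not_not_intro hF)]
      exact add_nonneg (hnn _) (hnn _)
    · rw [if_pos hF]
      unfold freeAt at hF
      push_neg at hF
      obtain ⟨j, hjmem, hjt⟩ := hF
      have hjt' : touches (ends j) (ends e).1 ∨ touches (ends j) (ends e).2 := by
        tauto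
      replace hjt := hjt'
      have single : ∀ T : Finset (Fin m), j ∈ T →
          massP p ω ≤ ∑ j' ∈ T, (if j' ∈ greedyUpTo ends ω e.1 then massP p ω else 0) := by
        intro T hT
        have h := Finset.single_le_sum
          (f := fun j' : Fin m => if j' ∈ greedyUpTo ends ω e.1 then massP p ω else 0)
          (fun j' _ => by split_ifs; exacts [hmassnn ω, le_refl 0]) hT
        simpa [hjmem] using h
      rcases hjt with h | h
      · have h1 := single (Finset.univ.filter (fun j' => touches (ends j') (ends e).1))
          (Finset.mem_filter.2 ⟨Finset.mem_univ j, h⟩)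
        have h2 := hnn (Finset.univ.filter (fun j => touches (ends j) (ends e).2))
        linarith
      · have h1 := single (Finset.univ.filter (fun j' => touches (ends j') (ends e).2))
          (Finset.mem_filter.2 ⟨Finset.mem_univ j, h⟩)
        have h2 := hnn (Finset.univ.filter (fun j => touches (ends j) (ends e).1))
        linarith
  have hTu : ∀ v : V,
      (∑ j ∈ Finset.univ.filter (fun j => touches (ends j) v),
        prOf (massP p) (fun ω => j ∈ greedyUpTo ends ω e.1)) ≤ 1 / 3 := by
    intro v
    calc (∑ j ∈ Finset.univ.filter (fun j => touches (ends j) v),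
          prOf (massP p) (fun ω => j ∈ greedyUpTo ends ω e.1))
        ≤ ∑ j ∈ Finset.univ.filter (fun j => touches (ends j) v), x j / 3 :=
          Finset.sum_le_sum fun j _ => hj j
      _ = (∑ j ∈ Finset.univ.filter (fun j => touches (ends j) v), x j) / 3 := by
          rw [Finset.sum_div]
      _ ≤ 1 / 3 := by linarith [hxv v]
  have hcompl := prOf_compl p (fun ω => freeAt ends ω e)
  have := hTu (ends e).1
  have := hTu (ends e).2
  linarith

/-! ### Constructing the fixed-point probabilities -/

open Classical in
noncomputable def buildP (ends : Fin m → V × V) (x : Fin m → ℝ) : ℕ → (Fin m → ℝ)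
  | 0 => fun _ => 0
  | k + 1 =>
    if h : k < m then
      Function.update (buildP ends x k) ⟨k, h⟩
        ((x ⟨k, h⟩ / 3) / prOf (massP (buildP ends x k)) (fun ω => freeAt ends ω ⟨k, h⟩))
    else buildP ends x k

lemma buildP_agree (ends : Fin m → V × V) (x : Fin m → ℝ) :
    ∀ {k l : ℕ}, k ≤ l → ∀ j : Fin m, j.1 < k → buildP ends x l j = buildP ends x k j := by
  intro k l h
  induction l, h using Nat.le_induction with
  | base => intro j hj; rfl
  | succ l hl ih =>
    intro j hj
    have hstep : buildP ends x (l + 1) j = buildP ends x l j := by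
      rw [buildP]
      split_ifs with h
      · refine Function.update_of_ne ?_ _ _
        intro hh
        have hvl : j.1 = l := by rw [hh]
        omega
      · rfl
    rw [hstep]
    exact ih j hj

end AuxOCRS

open Classical in
/-- Warm-up `1/3`-OCRS for matching with edge arrival:
for a finite simple graph (edges `ends : Fin m → V × V`, pairwise distinct as unordered
pairs) and `x` in the fractional matching polytope:
(1) for any activation probabilities `p : E → [0,1]`, if `p` satisfies the
`(1/3)`-fixed-point condition at every edge preceding `e`, then `P(F_e) ≥ 1/3`;
(2) consequently, there exists `p : E → [0,1]` satisfying the `(1/3)`-fixed-point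
condition at every edge, so that every edge `e` is matched with probability exactly
`x e / 3`; and (3) the greedy process always outputs a matching. -/
theorem warmup_third_OCRS {V : Type*} {m : ℕ}
    (ends : Fin m → V × V)
    (hsimple : ∀ i, (ends i).1 ≠ (ends i).2)
    (hdist : ∀ i j : Fin m, i ≠ j →
      ¬(((ends i).1 = (ends j).1 ∧ (ends i).2 = (ends j).2) ∨
        ((ends i).1 = (ends j).2 ∧ (ends i).2 = (ends j).1)))
    (x : Fin m → ℝ)
    (hx0 : ∀ i, 0 ≤ x i)
    (hxv : ∀ v : V,
      ∑ i ∈ Finset.univ.filter (fun i => touches (ends i) v), x i ≤ 1) :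
    (∀ p : Fin m → ℝ, (∀ i, 0 ≤ p i ∧ p i ≤ 1) →
      ∀ e : Fin m, (∀ j : Fin m, j < e → fixedPt ends x p (1 / 3) j) →
        prOf (massP p) (fun ω => freeAt ends ω e) ≥ 1 / 3) ∧
    (∃ p : Fin m → ℝ, (∀ i, 0 ≤ p i ∧ p i ≤ 1) ∧
      ∀ e : Fin m, fixedPt ends x p (1 / 3) e ∧
        prOf (massP p) (fun ω => matchedEdge ends ω e) = x e / 3) ∧
    (∀ ω : Fin m → Bool, ∀ i ∈ greedyUpTo ends ω m, ∀ j ∈ greedyUpTo ends ω m,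
      i ≠ j → ¬ touches (ends j) (ends i).1 ∧ ¬ touches (ends j) (ends i).2) := by
  classical
  refine ⟨fun p hp e hfix => key_free ends x hx0 hxv p hp e hfix, ?_, greedy_matching ends⟩
  have hxle1 : ∀ i : Fin m, x i ≤ 1 := by
    intro i
    have h1 : x i ≤ ∑ j ∈ Finset.univ.filter (fun j => touches (ends j) (ends i).1), x j := by
      refine Finset.single_le_sum (fun j _ => hx0 j) ?_
      exact Finset.mem_filter.2 ⟨Finset.mem_univ i, Or.inl rfl⟩
    exact h1.trans (hxv _)
  set p : Fin m → ℝ := buildP ends x m with hpdef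
  have hfreeQ : ∀ (k : Fin m) (n : ℕ), k.1 ≤ n → ∀ ω ω' : Fin m → Bool,
      (∀ j : Fin m, j.1 < n → ω j = ω' j) → (freeAt ends ω k ↔ freeAt ends ω' k) :=
    fun k n hk ω ω' h => freeAt_congr ends k (fun j hj => h j (lt_of_lt_of_le hj hk))
  have main : ∀ n : ℕ, ∀ i : Fin m, i.1 = n →
      ((0 ≤ p i ∧ p i ≤ 1) ∧ fixedPt ends x p (1 / 3) i) := by
    intro n
    induction n using Nat.strong_induction_on with
    | _ n ih =>
      intro i hin
      subst hin
      have hprev : ∀ j : Fin m, j < i →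
          (0 ≤ p j ∧ p j ≤ 1) ∧ fixedPt ends x p (1 / 3) j :=
        fun j hj => ih j.1 hj j rfl
      set pt : Fin m → ℝ := fun j => if j.1 < i.1 then p j else 0 with hptdef
      have hptb : ∀ j : Fin m, 0 ≤ pt j ∧ pt j ≤ 1 := by
        intro j
        rw [hptdef]
        dsimp only
        by_cases h : j.1 < i.1
        · rw [if_pos h]
          exact (hprev j h).1
        · rw [if_neg h]
          norm_num
      have hagree : ∀ j : Fin m, j.1 < i.1 → pt j = p j := by
        intro j hj
        rw [hptdef]
        dsimp only
        rw [if_pos hj]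
      have hfreeeq : ∀ k : Fin m, k.1 ≤ i.1 →
          prOf (massP pt) (fun ω => freeAt ends ω k)
            = prOf (massP p) (fun ω => freeAt ends ω k) :=
        fun k hk => prOf_eq_of_agree pt p i.1 _ (hfreeQ k i.1 hk) hagree
      have hfixt : ∀ j : Fin m, j < i → fixedPt ends x pt (1 / 3) j := by
        intro j hj
        unfold fixedPt
        rw [hfreeeq j (le_of_lt hj), hagree j hj]
        exact (hprev j hj).2
      have hge := key_free ends x hx0 hxv pt hptb i hfixt
      rw [hfreeeq i le_rfl] at hge
      have hbuild : ∀ j : Fin m, j.1 < i.1 → buildP ends x i.1 j = p j := by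
        intro j hj
        rw [hpdef]
        exact (buildP_agree ends x i.isLt.le j hj).symm
      have hfreebuild : prOf (massP (buildP ends x i.1)) (fun ω => freeAt ends ω i)
          = prOf (massP p) (fun ω => freeAt ends ω i) :=
        prOf_eq_of_agree _ p i.1 _ (hfreeQ i i.1 le_rfl) hbuild
      have hpi : p i = (x i / 3) / prOf (massP p) (fun ω => freeAt ends ω i) := by
        have h1 : buildP ends x m i = buildP ends x (i.1 + 1) i :=
          buildP_agree ends x i.isLt i (Nat.lt_succ_self i.1)
        have h2 : buildP ends x (i.1 + 1) i
            = (x i / 3) / prOf (massP (buildP ends x i.1)) (fun ω => freeAt ends ω i) := by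
          rw [buildP, dif_pos i.isLt]
          exact Function.update_self _ _ _
        rw [hpdef, h1, h2, hfreebuild, ← hpdef]
      have hPpos : 0 < prOf (massP p) (fun ω => freeAt ends ω i) := by
        have : (0 : ℝ) < 1 / 3 := by norm_num
        linarith
      refine ⟨⟨?_, ?_⟩, ?_⟩
      · rw [hpi]
        exact div_nonneg (by linarith [hx0 i]) hPpos.le
      · rw [hpi, div_le_one hPpos]
        linarith [hxle1 i]
      · unfold fixedPt
        rw [hpi, div_mul_cancel₀ _ (ne_of_gt hPpos)]
        ring
  refine ⟨p, fun i => (main i.1 i rfl).1, fun e => ?_⟩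
  refine ⟨(main e.1 e rfl).2, ?_⟩
  have h1 : prOf (massP p) (fun ω => matchedEdge ends ω e)
      = prOf (massP p) (fun ω => ω e = true ∧ freeAt ends ω e) :=
    prOf_congr _ fun ω => matchedEdge_iff ends ω e
  rw [h1, prOf_cond p e _ (freeAt_update_iff ends e)]
  have h2 := (main e.1 e rfl).2
  unfold fixedPt at h2
  rw [h2]
  ring
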